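/- Let Γ = ΓL(1, q²) be the full semilinear group on a 2-dimensional F_q-space V = F_{q²} (q even, q > 2), viewed as GL(1,q²).2 ≤ GL(2,q), and let Z ≅ F_q^× be the scalar group. Then for any nonzero x ∈ V, the stabilizer N_Γ(⟨x⟩_{F_q}) of the F_q-line through x equals Z × C₂, and the involution g in this stabilizer satisfies g(x) = x and g(y) = y + x for some y ∈ V with {x,y} an F_q-basis of V. -/

import Mathlib

/-- Let `q > 2` be even, `T = F_{q²}` viewed as a 2-dimensional
space over `F = F_q`, and let `Γ = ΓL(1,q²)` be the group of all maps
`v ↦ a·σ(v)` (`a ∈ T^×`, `σ ∈ Gal(T/F)`), acting `F`-linearly on `T`. Then for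
any nonzero `x ∈ T`, the stabilizer of the `F`-line `⟨x⟩` in `Γ` equals
`Z × C₂`: it consists exactly of the scalars and scalar multiples of a single
involution `g`, and this involution satisfies `g(x) = x` and `g(y) = y + x`
for some `y` with `x, y` an `F`-basis. -/
theorem stmt_14 {F T : Type*} [Field F] [Field T] [Algebra F T]
    [Fintype F] [Fintype T] [CharP F 2]
    (hq : 2 < Fintype.card F)
    (hT : Fintype.card T = Fintype.card F ^ 2)
    (Γ : Subgroup (Module.End F T)ˣ)
    (hΓ : ∀ u : (Module.End F T)ˣ, u ∈ Γ ↔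
      ∃ a : Tˣ, ∃ σ : T ≃ₐ[F] T, ∀ v : T, (u : Module.End F T) v = (a : T) * σ v)
    (x : T) (hx : x ≠ 0) :
    ∃ g ∈ Γ, g ≠ 1 ∧ g * g = 1 ∧ (g : Module.End F T) x = x ∧
      (∃ y : T, LinearIndependent F ![x, y] ∧
        (g : Module.End F T) y = y + x) ∧
      ∀ u ∈ Γ, (u : Module.End F T) x ∈ Submodule.span F {x} →
        ((∃ c : F, (u : Module.End F T) = c • 1) ∨
          (∃ c : F, (u : Module.End F T) = c • (g : Module.End F T))) := by
  classical
  set q := Fintype.card F with hqdef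
  have hq1 : 1 < q := by omega
  haveI : CharP T 2 := charP_of_injective_algebraMap (algebraMap F T).injective 2
  haveI : Fact (Nat.Prime 2) := ⟨Nat.prime_two⟩
  haveI : ExpChar T 2 := .prime Nat.prime_two
  obtain ⟨n, hp2, hn⟩ := FiniteField.card F 2
  -- Frobenius
  let fr : T →+* T := iterateFrobenius T 2 (n : ℕ)
  have hfr : ∀ v : T, fr v = v ^ q := fun v => by
    rw [iterateFrobenius_def, hqdef, hn]
  have hcomm : ∀ c : F, fr (algebraMap F T c) = algebraMap F T c := fun c => by
    rw [hfr, ← map_pow, FiniteField.pow_card]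
  let f : T →ₐ[F] T := { fr with commutes' := hcomm }
  have hfbij : Function.Bijective f :=
    Finite.injective_iff_bijective.1 (f.toRingHom.injective)
  let σ₀ : T ≃ₐ[F] T := AlgEquiv.ofBijective f hfbij
  have hσ : ∀ v : T, σ₀ v = v ^ q := fun v => hfr v
  have hσσ : ∀ v : T, σ₀ (σ₀ v) = v := fun v => by
    rw [hσ, hσ, ← pow_mul, ← pow_two, ← hT, FiniteField.pow_card]
  -- a generator not fixed by Frobenius
  obtain ⟨ζ, hζ⟩ := IsCyclic.exists_generator (α := Tˣ)
  have hζq : ((ζ : T)) ^ q ≠ (ζ : T) := by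
    intro h
    have h1 : ζ ^ q = ζ := Units.ext (by push_cast; exact h)
    have h3 : ζ ^ (q - 1) = 1 := by
      have h2 : ζ ^ (q - 1) * ζ = 1 * ζ := by
        rw [one_mul, ← pow_succ, Nat.sub_add_cancel (by omega : 1 ≤ q), h1]
      exact mul_right_cancel h2
    have h4 : orderOf ζ ∣ q - 1 := orderOf_dvd_of_pow_eq_one h3
    have h5 : orderOf ζ = Nat.card Tˣ :=
      orderOf_eq_card_of_forall_mem_zpowers hζ
    have h6 : Nat.card Tˣ = q ^ 2 - 1 := by
      rw [Nat.card_eq_fintype_card, Fintype.card_units, hT]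
    have h7 : q ^ 2 - 1 ≤ q - 1 := by
      rw [← h6, ← h5]; exact Nat.le_of_dvd (by omega) h4
    have h8 : q ^ 1 < q ^ 2 := Nat.pow_lt_pow_right hq1 (by omega)
    rw [pow_one] at h8
    omega
  -- fixed points of the Frobenius are exactly the base field
  have hfix : ∀ w : T, w ^ q = w → ∃ c : F, algebraMap F T c = w := by
    intro w hw
    by_contra hcon
    push_neg at hcon
    set P : Polynomial T := Polynomial.X ^ q - Polynomial.X with hP
    have hP0 : P ≠ 0 := FiniteField.X_pow_card_sub_X_ne_zero T hq1
    have hroot : ∀ z : T, z ^ q = z → z ∈ P.roots := by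
      intro z hz
      rw [Polynomial.mem_roots hP0]
      simp [hP, Polynomial.IsRoot, hz]
    have hA : (Finset.univ.image (algebraMap F T)).card = q := by
      rw [Finset.card_image_of_injective _ (algebraMap F T).injective, Finset.card_univ]
    have hsub : insert w (Finset.univ.image (algebraMap F T)) ⊆ P.roots.toFinset := by
      intro z hz
      rw [Finset.mem_insert] at hz
      rw [Multiset.mem_toFinset]
      rcases hz with rfl | hz
      · exact hroot _ hw
      · obtain ⟨c, _, rfl⟩ := Finset.mem_image.1 hz
        exact hroot _ (by rw [← map_pow, FiniteField.pow_card])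
    have hcard : (insert w (Finset.univ.image (algebraMap F T))).card = q + 1 := by
      rw [Finset.card_insert_of_notMem, hA]
      intro hmem
      obtain ⟨c, _, hc⟩ := Finset.mem_image.1 hmem
      exact hcon c hc
    have hle := Finset.card_le_card hsub
    have h2 : P.roots.toFinset.card ≤ q := by
      refine le_trans (Multiset.toFinset_card_le _) ?_
      have h3 := P.card_roots'
      rwa [hP, FiniteField.X_pow_card_sub_X_natDegree_eq T hq1] at h3
    omega
  -- the Galois group has exactly two elements : `1` and `σ₀`
  have hrank : Module.finrank F T = 2 := by
    have hcard := Module.card_fintype (Module.finBasis F T)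
    rw [Fintype.card_fin, hT] at hcard
    exact (Nat.pow_right_injective (by omega) hcard.symm)
  have hσ0ne : σ₀ ≠ 1 := by
    intro h
    apply hζq
    have := congrArg (fun e : T ≃ₐ[F] T => e (ζ : T)) h
    simpa [hσ] using this
  have hcardGal : Fintype.card (T ≃ₐ[F] T) = 2 := by
    rw [← Nat.card_eq_fintype_card, IsGalois.card_aut_eq_finrank, hrank]
  have hclass : ∀ σ : T ≃ₐ[F] T, σ = 1 ∨ σ = σ₀ := by
    intro σ
    have huniv : ({1, σ₀} : Finset (T ≃ₐ[F] T)) = Finset.univ := by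
      apply Finset.eq_univ_of_card
      rw [hcardGal, Finset.card_insert_of_notMem (by simpa using hσ0ne.symm),
        Finset.card_singleton]
    have : σ ∈ ({1, σ₀} : Finset (T ≃ₐ[F] T)) := huniv ▸ Finset.mem_univ σ
    simpa using this
  -- the involution
  have hσx : σ₀ x ≠ 0 := fun h => hx (by simpa using σ₀.injective (by simpa using h))
  set G : Module.End F T := (x / σ₀ x) • (σ₀.toLinearMap : Module.End F T) with hGdef
  have hG : ∀ v : T, G v = x / σ₀ x * σ₀ v := fun v => by
    simp [hGdef, smul_eq_mul]
  have hGG : ∀ v : T, G (G v) = v := by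
    intro v
    rw [hG, hG, map_mul, map_div₀, hσσ, hσσ]
    field_simp
  have hGG1 : G * G = 1 := by
    apply LinearMap.ext
    intro v
    simpa [Module.End.mul_apply] using hGG v
  have hGne : ¬∀ v : T, G v = v := by
    intro hall
    have h1 : x / σ₀ x = 1 := by simpa [hG] using hall 1
    have h2 := hall (ζ : T)
    rw [hG, h1, one_mul, hσ] at h2
    exact hζq h2
  let g : (Module.End F T)ˣ := ⟨G, G, hGG1, hGG1⟩
  have hgΓ : g ∈ Γ := by
    rw [hΓ]
    exact ⟨Units.mk0 _ (div_ne_zero hx hσx), σ₀, fun v => hG v⟩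
  have hgne : g ≠ 1 := by
    intro h
    apply hGne
    intro v
    have : G = (1 : Module.End F T) := congrArg Units.val h
    rw [this]; rfl
  have hgx : G x = x := by
    rw [hG]
    exact div_mul_cancel₀ x hσx
  -- find y
  obtain ⟨w, hw⟩ : ∃ w : T, G w ≠ w := by
    by_contra hc; push_neg at hc; exact hGne hc
  set d : T := G w - w with hd
  have hd0 : d ≠ 0 := sub_ne_zero.2 hw
  have hGd : G d = d := by
    rw [hd, map_sub, hGG, ← CharTwo.neg_eq (G w - w)]
    ring
  have hdfix : (d / x) ^ q = d / x := by
    have h1 : x / σ₀ x * σ₀ d = d := by rw [← hG]; exact hGd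
    have h2 : σ₀ d * x = d * σ₀ x := by
      field_simp at h1
      linear_combination h1
    rw [← hσ, map_div₀, div_eq_div_iff hσx hx]
    linear_combination h2
  obtain ⟨c, hc⟩ := hfix _ hdfix
  have hc0 : c ≠ 0 := by
    intro h
    rw [h, map_zero] at hc
    apply hd0
    rcases div_eq_zero_iff.1 hc.symm with h' | h'
    · exact h'
    · exact absurd h' hx
  have hdc : d = c • x := by
    rw [Algebra.smul_def, hc, div_mul_cancel₀ _ hx]
  refine ⟨g, hgΓ, hgne, Units.ext hGG1, hgx, ⟨c⁻¹ • w, ?_, ?_⟩, ?_⟩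
  · -- linear independence
    rw [LinearIndependent.pair_iff]
    intro s t hst
    by_cases ht : t = 0
    · subst ht
      simp only [zero_smul, add_zero, smul_eq_zero] at hst
      exact ⟨hst.resolve_right hx, rfl⟩
    · exfalso
      have hy : c⁻¹ • w = (-(t⁻¹ * s)) • x := by
        have : t • (c⁻¹ • w) = -(s • x) := by
          rw [eq_neg_iff_add_eq_zero, add_comm]; exact hst
        calc c⁻¹ • w = t⁻¹ • (t • (c⁻¹ • w)) := by
              rw [smul_smul, inv_mul_cancel₀ ht, one_smul]
          _ = (-(t⁻¹ * s)) • x := by rw [this, smul_neg, smul_smul, neg_smul]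
      have hGy : G (c⁻¹ • w) = c⁻¹ • w + x := by
        have hGw : G w = w + d := by rw [hd]; ring
        rw [map_smul, hGw, smul_add, hdc, smul_smul, inv_mul_cancel₀ hc0, one_smul]
      rw [hy, map_smul, hgx, ← hy] at hGy
      exact hx ((left_eq_add).1 hGy)
  · -- g y = y + x
    show G (c⁻¹ • w) = c⁻¹ • w + x
    have hGw : G w = w + d := by rw [hd]; ring
    rw [map_smul, hGw, smul_add, hdc, smul_smul, inv_mul_cancel₀ hc0, one_smul]
  · -- stabilizer classification
    intro u hu hspan
    obtain ⟨a, σ, hua⟩ := (hΓ u).1 hu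
    obtain ⟨c', hc'⟩ := Submodule.mem_span_singleton.1 hspan
    rcases hclass σ with h1 | h1
    · left
      refine ⟨c', ?_⟩
      have hax : (a : T) * x = algebraMap F T c' * x := by
        rw [← Algebra.smul_def, hc', hua, h1]
        simp
      have ha : (a : T) = algebraMap F T c' := mul_right_cancel₀ hx hax
      apply LinearMap.ext
      intro v
      rw [hua, h1]
      simp [ha, Algebra.smul_def]
    · right
      refine ⟨c', ?_⟩
      have hax : (a : T) * σ₀ x = algebraMap F T c' * x := by
        rw [← Algebra.smul_def, hc', hua, h1]
      have ha : (a : T) = algebraMap F T c' * x / σ₀ x := by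
        field_simp
        linear_combination hax
      apply LinearMap.ext
      intro v
      rw [hua, h1, ha]
      show _ = c' • G v
      rw [hG, Algebra.smul_def]
      ring
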